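/- Fix a real number λ ≠ 0. For every integer n ≥ 0 and every real x, the degenerate Bell polynomial satisfies B_{n,λ}(x) = Σ_{k=0}^{n} S_{2,λ}(n,k)(x)_{k,λ}. -/

import Mathlib

open Finset

/-- The degenerate falling factorial `(x)_{n,λ} = x(x−λ)⋯(x−(n−1)λ)`;
for `lam = 1` it is the ordinary falling factorial `(x)_n`. -/
noncomputable def dff (lam : ℝ) (n : ℕ) (x : ℝ) : ℝ :=
  ∏ i ∈ Finset.range n, (x - i * lam)

/-- The degenerate exponential `e_λ^x(t) = Σ_{n≥0} (x)_{n,λ} t^n/n!`. -/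
noncomputable def degExp (lam x : ℝ) : PowerSeries ℝ :=
  PowerSeries.mk fun n => dff lam n x / n.factorial

/-- The degenerate logarithm `log_λ(1+t) = Σ_{n≥1} λ^{n−1}(1)_{n,1/λ} t^n/n!`. -/
noncomputable def degLog (lam : ℝ) : PowerSeries ℝ :=
  PowerSeries.mk fun n =>
    if n = 0 then 0 else lam ^ (n - 1) * dff (1 / lam) n 1 / n.factorial

/-- Composition `f(g(t))` of formal power series (valid definition of composition
when `g` has zero constant term, as in all uses below). -/
noncomputable def pscomp (f g : PowerSeries ℝ) : PowerSeries ℝ :=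
  PowerSeries.mk fun n =>
    ∑ k ∈ Finset.range (n + 1), (PowerSeries.coeff k f) * (PowerSeries.coeff n (g ^ k))

lemma dff_zero (lam x : ℝ) : dff lam 0 x = 1 := by simp [dff]

lemma dff_succ (lam x : ℝ) (n : ℕ) : dff lam (n + 1) x = dff lam n x * (x - n * lam) :=
  Finset.prod_range_succ _ _

lemma dff_add (lam x y : ℝ) (n : ℕ) :
    dff lam n (x + y) = ∑ ij ∈ antidiagonal n,
      (n.choose ij.1 : ℝ) * (dff lam ij.1 x * dff lam ij.2 y) := by
  induction n with
  | zero => simp [dff]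
  | succ n ih =>
    rw [dff_succ, ih, Finset.sum_mul, Finset.sum_antidiagonal_choose_succ_mul
      (fun i j => dff lam i x * dff lam j y) n]
    rw [← Finset.sum_add_distrib]
    refine Finset.sum_congr rfl fun ij hij => ?_
    have hsum : ij.1 + ij.2 = n := Finset.HasAntidiagonal.mem_antidiagonal.mp hij
    have h1 : x + y - n * lam = (x - ij.1 * lam) + (y - ij.2 * lam) := by
      rw [← hsum]; push_cast; ring
    rw [h1, mul_add, dff_succ, dff_succ,
      ← Nat.choose_symm_of_eq_add hsum.symm]
    ring

lemma degExp_mul (lam x y : ℝ) : degExp lam x * degExp lam y = degExp lam (x + y) := by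
  ext n
  rw [PowerSeries.coeff_mul]
  simp only [degExp, PowerSeries.coeff_mk]
  rw [dff_add, Finset.sum_div]
  refine Finset.sum_congr rfl fun ij hij => ?_
  have hsum : ij.1 + ij.2 = n := Finset.HasAntidiagonal.mem_antidiagonal.mp hij
  have h1 : ij.1 ≤ n := by omega
  have h2 : n - ij.1 = ij.2 := by omega
  have h := Nat.choose_mul_factorial_mul_factorial h1
  rw [h2] at h
  have h1f : (ij.1.factorial : ℝ) ≠ 0 := Nat.cast_ne_zero.mpr (Nat.factorial_ne_zero _)
  have h2f : (ij.2.factorial : ℝ) ≠ 0 := Nat.cast_ne_zero.mpr (Nat.factorial_ne_zero _)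
  have hnf : (n.factorial : ℝ) ≠ 0 := Nat.cast_ne_zero.mpr (Nat.factorial_ne_zero _)
  have hcast : (n.choose ij.1 : ℝ) * ij.1.factorial * ij.2.factorial = n.factorial := by
    exact_mod_cast congrArg (Nat.cast : ℕ → ℝ) h
  field_simp
  rw [← hcast]
  ring

lemma degExp_zero (lam : ℝ) : degExp lam 0 = 1 := by
  ext n
  simp only [degExp, PowerSeries.coeff_mk, PowerSeries.coeff_one]
  cases n with
  | zero => simp [dff_zero]
  | succ m =>
    have : dff lam (m + 1) 0 = 0 := by
      simp [dff, Finset.prod_range_succ']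
    simp [this]

lemma degExp_pow (lam : ℝ) (j : ℕ) : (degExp lam 1) ^ j = degExp lam (j : ℝ) := by
  induction j with
  | zero => simpa using (degExp_zero lam).symm
  | succ j ih => rw [pow_succ, ih, degExp_mul]; push_cast; ring_nf

lemma alt_sum_choose (n : ℕ) :
    ∑ i ∈ range (n + 1), (-1 : ℝ) ^ (n - i) * n.choose i = if n = 0 then 1 else 0 := by
  rw [← Finset.sum_range_reflect]
  simp only [Nat.add_sub_cancel]
  have h : ∀ i ∈ range (n + 1),
      (-1 : ℝ) ^ (n - (n - i)) * n.choose (n - i) = (-1 : ℝ) ^ i * n.choose i := by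
    intro i hi
    have hi' : i ≤ n := by simpa [Nat.lt_succ_iff] using hi
    rw [Nat.sub_sub_self hi', Nat.choose_symm hi']
  rw [Finset.sum_congr rfl h]
  have h2 := congrArg (Int.cast : ℤ → ℝ) (Int.alternating_sum_range_choose (n := n))
  push_cast at h2
  simpa using h2

lemma choose_inversion (k m : ℕ) :
    ∑ j ∈ range (k + 1), (-1 : ℝ) ^ (k - j) * k.choose j * j.choose m
      = if m = k then 1 else 0 := by
  by_cases hmk : m ≤ k
  · rw [show k + 1 = m + (k - m + 1) by omega, Finset.sum_range_add]
    have hz : ∀ j ∈ range m, (-1 : ℝ) ^ (k - j) * k.choose j * j.choose m = 0 := by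
      intro j hj
      rw [Nat.choose_eq_zero_of_lt (Finset.mem_range.mp hj)]
      push_cast; ring
    rw [Finset.sum_congr rfl hz, Finset.sum_const_zero, zero_add]
    have hterm : ∀ i ∈ range (k - m + 1),
        (-1 : ℝ) ^ (k - (m + i)) * k.choose (m + i) * (m + i).choose m
          = (k.choose m : ℝ) * ((-1 : ℝ) ^ (k - m - i) * (k - m).choose i) := by
      intro i hi
      have hi' : i ≤ k - m := by simpa [Nat.lt_succ_iff] using hi
      have h1 : m + i ≤ k := by omega
      have hc := congrArg (Nat.cast : ℕ → ℝ) (Nat.choose_mul (n := k) (Nat.le_add_right m i))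
      push_cast at hc
      simp only [Nat.add_sub_cancel_left] at hc
      rw [mul_assoc, hc, show k - (m + i) = k - m - i by omega]
      ring
    rw [Finset.sum_congr rfl hterm, ← Finset.mul_sum, alt_sum_choose (k - m)]
    by_cases h : m = k
    · simp [h]
    · have hne : k - m ≠ 0 := by omega
      simp [h, hne]
  · have hz : ∀ j ∈ range (k + 1),
        (-1 : ℝ) ^ (k - j) * k.choose j * j.choose m = 0 := by
      intro j hj
      have hj' : j ≤ k := by simpa [Nat.lt_succ_iff] using hj
      rw [show (j.choose m) = 0 from Nat.choose_eq_zero_of_lt (by omega)]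
      push_cast; ring
    rw [Finset.sum_congr rfl hz, Finset.sum_const_zero]
    have : m ≠ k := by omega
    simp [this]

lemma dff_one_nat (m j : ℕ) : dff 1 m (j : ℝ) = (m.factorial : ℝ) * j.choose m := by
  have h : dff 1 m (j : ℝ) = (j.descFactorial m : ℝ) := by
    induction m with
    | zero => simp [dff_zero]
    | succ m ih =>
      rw [dff_succ, ih, Nat.descFactorial_succ]
      by_cases hjm : m ≤ j
      · push_cast [Nat.cast_sub hjm]; ring
      · have h0 : j.descFactorial m = 0 := Nat.descFactorial_eq_zero_iff_lt.mpr (by omega)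
        rw [h0]
        simp
  rw [h, Nat.descFactorial_eq_factorial_mul_choose]
  push_cast; ring

lemma coeff_degExp (lam x : ℝ) (k : ℕ) :
    PowerSeries.coeff k (degExp lam x) = dff lam k x / k.factorial := by
  simp [degExp]

lemma key_sum (lam : ℝ) (S2 : ℕ → ℕ → ℝ)
    (hS2 : ∀ (n : ℕ) (x : ℝ), dff lam n x = ∑ k ∈ Finset.range (n + 1), S2 n k * dff 1 k x)
    (n k : ℕ) (hk : k ≤ n) :
    ∑ j ∈ range (k + 1), (-1 : ℝ) ^ (k - j) * k.choose j * dff lam n (j : ℝ)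
      = k.factorial * S2 n k := by
  have h1 : ∀ j ∈ range (k + 1), (-1 : ℝ) ^ (k - j) * k.choose j * dff lam n (j : ℝ)
      = ∑ m ∈ range (n + 1),
          S2 n m * m.factorial * ((-1 : ℝ) ^ (k - j) * k.choose j * j.choose m) := by
    intro j hj
    rw [hS2 n (j : ℝ), Finset.mul_sum]
    refine Finset.sum_congr rfl fun m hm => ?_
    rw [dff_one_nat]; ring
  rw [Finset.sum_congr rfl h1, Finset.sum_comm]
  have h2 : ∀ m ∈ range (n + 1),
      ∑ j ∈ range (k + 1),
          S2 n m * m.factorial * ((-1 : ℝ) ^ (k - j) * k.choose j * j.choose m)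
        = if m = k then S2 n m * m.factorial else 0 := by
    intro m hm
    rw [← Finset.mul_sum, choose_inversion]
    by_cases h : m = k <;> simp [h]
  rw [Finset.sum_congr rfl h2, Finset.sum_ite_eq' (range (n + 1)) k
    (fun m => S2 n m * m.factorial)]
  simp [Nat.lt_succ_iff, hk, mul_comm]

lemma coeff_pow_sub_one (lam : ℝ) (n k : ℕ) :
    PowerSeries.coeff n ((degExp lam 1 - 1) ^ k)
      = (∑ j ∈ range (k + 1), (-1 : ℝ) ^ (k - j) * k.choose j * dff lam n (j : ℝ))
          / n.factorial := by
  rw [sub_pow, map_sum, Finset.sum_div]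
  refine Finset.sum_congr rfl fun j hj => ?_
  have hj' : j ≤ k := by simpa [Nat.lt_succ_iff] using hj
  rw [one_pow, mul_one, degExp_pow]
  have e1 : ((-1 : PowerSeries ℝ)) ^ (j + k) * degExp lam (j : ℝ) * (k.choose j : PowerSeries ℝ)
      = PowerSeries.C ((-1 : ℝ) ^ (j + k) * k.choose j) * degExp lam (j : ℝ) := by
    rw [map_mul, map_pow, map_neg, map_one, map_natCast]; ring
  rw [e1, PowerSeries.coeff_C_mul, coeff_degExp]
  have hsgn : ((-1 : ℝ)) ^ (j + k) = (-1 : ℝ) ^ (k - j) := by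
    rw [show j + k = (k - j) + 2 * j by omega, pow_add, pow_mul, neg_one_sq, one_pow, mul_one]
  rw [hsgn]
  ring

theorem degenerate_bell_expansion (lam : ℝ) (hlam : lam ≠ 0)
    (S2 : ℕ → ℕ → ℝ) (B : ℕ → ℝ → ℝ)
    (hS2 : ∀ (n : ℕ) (x : ℝ), dff lam n x = ∑ k ∈ Finset.range (n + 1), S2 n k * dff 1 k x)
    (hB : ∀ x : ℝ, pscomp (degExp lam x) (degExp lam 1 - 1) = PowerSeries.mk (fun n => B n x / n.factorial))
    : ∀ (n : ℕ) (x : ℝ), B n x = ∑ k ∈ Finset.range (n + 1), S2 n k * dff lam k x := by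
  intro n x
  have h := congrArg (PowerSeries.coeff n) (hB x)
  simp only [pscomp, PowerSeries.coeff_mk] at h
  have hco : ∀ k ∈ range (n + 1),
      PowerSeries.coeff k (degExp lam x) *
          PowerSeries.coeff n ((degExp lam 1 - 1) ^ k)
        = S2 n k * dff lam k x / n.factorial := by
    intro k hk
    have hk' : k ≤ n := by simpa [Nat.lt_succ_iff] using hk
    rw [coeff_degExp, coeff_pow_sub_one, key_sum lam S2 hS2 n k hk']
    have hkf : (k.factorial : ℝ) ≠ 0 := Nat.cast_ne_zero.mpr (Nat.factorial_ne_zero _)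
    field_simp
  rw [Finset.sum_congr rfl hco, ← Finset.sum_div] at h
  have hnf : (n.factorial : ℝ) ≠ 0 := Nat.cast_ne_zero.mpr (Nat.factorial_ne_zero _)
  have h2 := congrArg (fun z : ℝ => z * n.factorial) h
  field_simp at h2
  linarith
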